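/- arXiv:1608.02731 — 2 statements merged into one kernel-verified Lean document; each statement's English description precedes it below -/
import Mathlib

section
/- Let (Ω, F, P) be a probability space carrying two independent random variables R, Y : Ω → {0, 1}, each taking the values 0 and 1 with probability 1/2. For each integer t with 1 ≤ t ≤ 1000, define λ_t : Ω → {0, 1} by λ_1 := Y and, for t ≥ 2, λ_t := 1 if R = 1 and λ_t := Y if R = 0. Then ∑_{t=1}^{1000} E[R − λ_t] = −999/4; in particular |∑_{t=1}^{1000} E[R − λ_t]| = (1/4)·1000 − (1/4)·1 > 249, so the sum is nonzero. -/
open MeasureTheory ProbabilityTheory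

/-- Explicit counterexample (Example 2) to step (*) in the proof of Theorem 2 of the
Lazy-PSRL paper: with `R, Y` independent, each uniform on `{0,1}`, and
`λ_1 = Y`, `λ_t = 1` if `R = 1` and `λ_t = Y` if `R = 0` for `t ≥ 2`, we have
`∑_{t=1}^{1000} E[R − λ_t] = −999/4`; in particular its absolute value equals
`(1/4)·1000 − (1/4)·1 > 249`, so the sum is nonzero. -/
theorem lazy_psrl_counterexample
    {Ω : Type*} {mΩ : MeasurableSpace Ω}
    (μ : Measure Ω) [IsProbabilityMeasure μ]
    (R Y : Ω → ℝ) (hR : Measurable R) (hY : Measurable Y)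
    (hR01 : ∀ ω, R ω = 0 ∨ R ω = 1) (hY01 : ∀ ω, Y ω = 0 ∨ Y ω = 1)
    (hRhalf : μ {ω | R ω = 1} = 1/2) (hYhalf : μ {ω | Y ω = 1} = 1/2)
    (hindep : IndepFun R Y μ)
    (lam : ℕ → Ω → ℝ)
    (hlam1 : lam 1 = Y)
    (hlam : ∀ t, 2 ≤ t → ∀ ω, lam t ω = if R ω = 1 then 1 else Y ω) :
    (∑ t ∈ Finset.Icc 1 1000, ∫ ω, (R ω - lam t ω) ∂μ) = -(999/4) ∧
    |∑ t ∈ Finset.Icc 1 1000, ∫ ω, (R ω - lam t ω) ∂μ|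
      = (1/4) * 1000 - (1/4) * 1 ∧
    ((1 : ℝ)/4) * 1000 - (1/4) * 1 > 249 ∧
    (∑ t ∈ Finset.Icc 1 1000, ∫ ω, (R ω - lam t ω) ∂μ) ≠ 0 := by
  have hA : MeasurableSet (R ⁻¹' {1}) := hR (measurableSet_singleton 1)
  have hB : MeasurableSet (Y ⁻¹' {1}) := hY (measurableSet_singleton 1)
  have hμA : μ (R ⁻¹' {1}) = 1/2 := hRhalf
  have hμB : μ (Y ⁻¹' {1}) = 1/2 := hYhalf
  have hμAc : μ (R ⁻¹' {1})ᶜ = 1/2 := by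
    rw [measure_compl hA (measure_ne_top μ _), hμA, measure_univ, one_div,
      ENNReal.one_sub_inv_two]
  have hμAcB : μ ((R ⁻¹' {1})ᶜ ∩ Y ⁻¹' {1}) = 1/4 := by
    have h1 : (R ⁻¹' {1})ᶜ = R ⁻¹' ({1}ᶜ) := rfl
    rw [h1, hindep.measure_inter_preimage_eq_mul _ _
      (measurableSet_singleton 1).compl (measurableSet_singleton 1), ← h1, hμAc, hμB]
    rw [one_div, ← ENNReal.mul_inv (Or.inl (by norm_num)) (Or.inl (by norm_num))]
    norm_num
  -- pointwise identities
  have hRind : R = (R ⁻¹' {1}).indicator (fun _ => (1:ℝ)) := by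
    funext ω
    rcases hR01 ω with h | h <;>
      simp [Set.indicator, Set.mem_preimage, h]
  have hYind : Y = (Y ⁻¹' {1}).indicator (fun _ => (1:ℝ)) := by
    funext ω
    rcases hY01 ω with h | h <;>
      simp [Set.indicator, Set.mem_preimage, h]
  have hIntR : Integrable R μ := by
    rw [hRind]; exact (integrable_const (1:ℝ)).indicator hA
  have hIntY : Integrable Y μ := by
    rw [hYind]; exact (integrable_const (1:ℝ)).indicator hB
  have hintR : ∫ ω, R ω ∂μ = 1/2 := by
    rw [hRind, integral_indicator_const _ hA, measureReal_def, hμA]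
    simp [ENNReal.toReal_div]
  have hintY : ∫ ω, Y ω ∂μ = 1/2 := by
    rw [hYind, integral_indicator_const _ hB, measureReal_def, hμB]
    simp [ENNReal.toReal_div]
  have E1 : ∫ ω, (R ω - lam 1 ω) ∂μ = 0 := by
    rw [hlam1, integral_sub hIntR hIntY, hintR, hintY]; ring
  have E2 : ∀ t ∈ Finset.Ioc 1 1000, ∫ ω, (R ω - lam t ω) ∂μ = -(1/4) := by
    intro t ht
    have ht2 : 2 ≤ t := (Finset.mem_Ioc.mp ht).1
    have hpt : ∀ ω, R ω - lam t ω =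
        -(((R ⁻¹' {1})ᶜ ∩ Y ⁻¹' {1}).indicator (fun _ => (1:ℝ)) ω) := by
      intro ω
      rw [hlam t ht2 ω]
      rcases hR01 ω with h | h
      · rcases hY01 ω with h' | h' <;>
          simp [Set.indicator, Set.mem_inter_iff, Set.mem_preimage, h, h']
      · simp [Set.indicator, Set.mem_inter_iff, Set.mem_preimage, h]
    calc ∫ ω, (R ω - lam t ω) ∂μ
        = ∫ ω, -(((R ⁻¹' {1})ᶜ ∩ Y ⁻¹' {1}).indicator (fun _ => (1:ℝ)) ω) ∂μ := by
          exact integral_congr_ae (Filter.Eventually.of_forall hpt)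
      _ = -(1/4) := by
          rw [integral_neg, integral_indicator_const _ (hA.compl.inter hB), measureReal_def, hμAcB]
          simp [ENNReal.toReal_div]
  have hsum : (∑ t ∈ Finset.Icc 1 1000, ∫ ω, (R ω - lam t ω) ∂μ) = -(999/4) := by
    rw [Finset.Icc_eq_cons_Ioc (by norm_num : (1:ℕ) ≤ 1000), Finset.sum_cons, E1,
      Finset.sum_congr rfl E2, Finset.sum_const, Nat.card_Ioc]
    norm_num
  refine ⟨hsum, ?_, by norm_num, by rw [hsum]; norm_num⟩
  rw [hsum]; norm_num
end

section
/- Let (Ω, F, P) be a probability space carrying two independent random variables R, Y : Ω → {0, 1}, each taking the values 0 and 1 with probability 1/2. Define the episode length L : Ω → ℕ by L := 1 if R = 1 and L := 1000 if R = 0. Then E[R] = E[Y] (indeed E[R − Y] = 0), yet E[L · (R − Y)] = −999/4 ≠ 0. -/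
open MeasureTheory ProbabilityTheory

/-- The key observation (equation (8)): with `R, Y` independent, each uniform on `{0,1}`,
and episode length `L = 1` if `R = 1` and `L = 1000` if `R = 0`, we have
`E[R] = E[Y]` (indeed `E[R − Y] = 0`), yet `E[L·(R − Y)] = −999/4 ≠ 0`. -/
theorem length_weighted_difference_nonzero
    {Ω : Type*} {mΩ : MeasurableSpace Ω}
    (μ : Measure Ω) [IsProbabilityMeasure μ]
    (R Y : Ω → ℝ) (hR : Measurable R) (hY : Measurable Y)
    (hR01 : ∀ ω, R ω = 0 ∨ R ω = 1) (hY01 : ∀ ω, Y ω = 0 ∨ Y ω = 1)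
    (hRhalf : μ {ω | R ω = 1} = 1/2) (hYhalf : μ {ω | Y ω = 1} = 1/2)
    (hindep : IndepFun R Y μ)
    (L : Ω → ℕ) (hL : ∀ ω, L ω = if R ω = 1 then 1 else 1000) :
    (∫ ω, R ω ∂μ = ∫ ω, Y ω ∂μ) ∧
    (∫ ω, (R ω - Y ω) ∂μ = 0) ∧
    (∫ ω, (L ω : ℝ) * (R ω - Y ω) ∂μ = -(999/4)) ∧
    (-(999/4) : ℝ) ≠ 0 := by
  have key : ∀ (X : Ω → ℝ), Measurable X → (∀ ω, X ω = 0 ∨ X ω = 1) →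
      μ {ω | X ω = 1} = 1/2 → (∫ ω, X ω ∂μ = 1/2) ∧ Integrable X μ := by
    intro X hX hX01 hXhalf
    have hmeas : MeasurableSet {ω | X ω = 1} := hX (measurableSet_singleton 1)
    have heq : X = Set.indicator {ω | X ω = 1} (fun _ => (1:ℝ)) := by
      funext ω; rcases hX01 ω with h | h <;> simp [Set.indicator, Set.mem_setOf_eq, h]
    constructor
    · rw [show (fun ω => X ω) = X from rfl, heq, integral_indicator hmeas,
        setIntegral_const, measureReal_def, hXhalf]
      simp [ENNReal.toReal_div]
    · refine ⟨hX.aestronglyMeasurable, ?_⟩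
      apply HasFiniteIntegral.of_bounded (C := 1)
      filter_upwards with ω
      rcases hX01 ω with h | h <;> simp [h]
  obtain ⟨hER, hiR⟩ := key R hR hR01 hRhalf
  obtain ⟨hEY, hiY⟩ := key Y hY hY01 hYhalf
  have hERY : ∫ ω, R ω * Y ω ∂μ = 1/4 := by
    have h := hindep.integral_mul_eq_mul_integral hiR.aestronglyMeasurable hiY.aestronglyMeasurable
    rw [show (fun ω => R ω * Y ω) = R * Y from rfl, h, hER, hEY]; norm_num
  have hiRY : Integrable (fun ω => R ω * Y ω) μ := hindep.integrable_mul hiR hiY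
  refine ⟨by rw [hER, hEY], by rw [integral_sub hiR hiY, hER, hEY]; ring, ?_, by norm_num⟩
  have hfun : (fun ω => (L ω : ℝ) * (R ω - Y ω))
      = fun ω => (R ω + 999 * (R ω * Y ω)) - 1000 * Y ω := by
    funext ω
    rw [hL ω]
    rcases hR01 ω with h | h <;> simp [h] <;> ring
  have h1 : Integrable (fun ω => R ω + 999 * (R ω * Y ω)) μ :=
    hiR.add (hiRY.const_mul 999)
  have h2 : Integrable (fun ω => 1000 * Y ω) μ := hiY.const_mul 1000
  rw [hfun, integral_sub h1 h2, integral_add hiR (hiRY.const_mul 999),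
    integral_const_mul, integral_const_mul, hER, hEY, hERY]
  norm_num
end
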